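/- If Z ↪ Z' is an injective map of sets and T ↪ T' is an injective homomorphism of semigroups, then the induced semigroup homomorphism S̃(T ⊔ Z) → S̃(T' ⊔ Z') is injective. -/

import Mathlib

/- Injectivity of the induced map S̃(T ⊔ Z) → S̃(T' ⊔ Z'). -/

namespace Stmt2

variable (T Z : Type*) [Semigroup T]

/-- The defining relation of `S̃(T ⊔ Z)`. -/
def rel : FreeSemigroup (T ⊕ Z) → FreeSemigroup (T ⊕ Z) → Prop := fun x y =>
  ∃ t t' : T, x = FreeSemigroup.of (Sum.inl t) * FreeSemigroup.of (Sum.inl t') ∧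
    y = FreeSemigroup.of (Sum.inl (t * t'))

/-- The smallest semigroup congruence containing the defining relation. -/
def con : Con (FreeSemigroup (T ⊕ Z)) := conGen (rel T Z)

/-- The quotient semigroup `S̃(T ⊔ Z)`. -/
def STilde := (con T Z).Quotient

instance : Semigroup (STilde T Z) := Con.semigroup (con T Z)

/-- The class of a generator `s ∈ T ⊔ Z` in `S̃(T ⊔ Z)`. -/
def ofGen (s : T ⊕ Z) : STilde T Z :=
  ((FreeSemigroup.of s : FreeSemigroup (T ⊕ Z)) : (con T Z).Quotient)

/-! ### Auxiliary development: normal forms -/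

section Lists

variable {α : Type*}

/-- The underlying (nonempty) list of a free-semigroup element. -/
def toL (w : FreeSemigroup α) : List α := w.head :: w.tail

lemma toL_ne_nil (w : FreeSemigroup α) : toL w ≠ [] := by simp [toL]

/-- The free-semigroup element of a nonempty list. -/
def mk (l : List α) (h : l ≠ []) : FreeSemigroup α := ⟨l.head h, l.tail⟩

lemma mk_toL (w : FreeSemigroup α) : mk (toL w) (toL_ne_nil w) = w := rfl

lemma toL_mul (u v : FreeSemigroup α) : toL (u * v) = toL u ++ toL v := rfl

lemma mk_cons (a : α) (l : List α) (h : l ≠ []) (h' : a :: l ≠ []) :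
    mk (a :: l) h' = FreeSemigroup.of a * mk l h := by
  cases l with
  | nil => exact absurd rfl h
  | cons b m => rfl

end Lists

section Red

variable {T Z : Type*} [Semigroup T]

/-- Prepend the letter `inl t` to a list, merging with a leading `inl`. -/
def redCons (t : T) : List (T ⊕ Z) → List (T ⊕ Z)
  | Sum.inl t' :: l => Sum.inl (t * t') :: l
  | l => Sum.inl t :: l

/-- Reduction of a word: merge adjacent `inl` letters. -/
def red : List (T ⊕ Z) → List (T ⊕ Z)
  | [] => []
  | Sum.inr z :: l => Sum.inr z :: red l
  | Sum.inl t :: l => redCons t (red l)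

lemma redCons_nil (t : T) : redCons t ([] : List (T ⊕ Z)) = [Sum.inl t] := rfl

lemma redCons_inl (t t' : T) (l : List (T ⊕ Z)) :
    redCons t (Sum.inl t' :: l) = Sum.inl (t * t') :: l := rfl

lemma redCons_inr (t : T) (z : Z) (l : List (T ⊕ Z)) :
    redCons t (Sum.inr z :: l) = Sum.inl t :: Sum.inr z :: l := rfl

lemma redCons_ne_nil (t : T) (l : List (T ⊕ Z)) : redCons t l ≠ [] := by
  cases l with
  | nil => simp [redCons]
  | cons a m => cases a <;> simp [redCons]

lemma red_ne_nil (l : List (T ⊕ Z)) (h : l ≠ []) : red l ≠ [] := by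
  cases l with
  | nil => exact absurd rfl h
  | cons a m => cases a <;> simp [red, redCons_ne_nil]

/-- A word is reduced if no two adjacent letters are both `inl`. -/
def Reduced : List (T ⊕ Z) → Prop :=
  List.Chain' (fun a b => a.isRight ∨ b.isRight)

lemma chain'_cons_iff {α : Type*} {R : α → α → Prop} {x : α} {l : List α} :
    List.Chain' R (x :: l) ↔ (∀ y ∈ l.head?, R x y) ∧ List.Chain' R l :=
  List.isChain_cons

lemma reduced_red : ∀ l : List (T ⊕ Z), Reduced (red l) := by
  intro l
  induction l with
  | nil => exact List.isChain_nil
  | cons a m ih =>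
    cases a with
    | inr z =>
      show Reduced (Sum.inr z :: red m)
      rw [Reduced, chain'_cons_iff]
      exact ⟨fun b _ => Or.inl rfl, ih⟩
    | inl t =>
      show Reduced (redCons t (red m))
      cases h : red m with
      | nil => rw [redCons_nil]; exact List.isChain_singleton _
      | cons b m' =>
        rw [h] at ih
        cases b with
        | inl t' =>
          rw [redCons_inl, Reduced, chain'_cons_iff]
          rw [Reduced, chain'_cons_iff] at ih
          refine ⟨fun y hy => ?_, ih.2⟩
          rcases ih.1 y hy with h1 | h1
          · simp at h1
          · exact Or.inr h1
        | inr z =>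
          rw [redCons_inr, Reduced, chain'_cons_iff]
          refine ⟨fun y hy => ?_, ih⟩
          simp only [List.head?_cons, Option.mem_some_iff] at hy
          subst hy
          exact Or.inr rfl

lemma red_of_reduced : ∀ l : List (T ⊕ Z), Reduced l → red l = l := by
  intro l
  induction l with
  | nil => intro _; rfl
  | cons a m ih =>
    intro h
    rw [Reduced, chain'_cons_iff] at h
    cases a with
    | inr z => show Sum.inr z :: red m = _; rw [ih h.2]
    | inl t =>
      show redCons t (red m) = _
      rw [ih h.2]
      cases m with
      | nil => rfl
      | cons b m' =>
        cases b with
        | inl t' =>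
          have := h.1 (Sum.inl t') (by simp)
          simp at this
        | inr z => rfl

lemma red_red (l : List (T ⊕ Z)) : red (red l) = red l :=
  red_of_reduced _ (reduced_red l)

lemma red_append_right : ∀ (a b : List (T ⊕ Z)), red (a ++ red b) = red (a ++ b) := by
  intro a b
  induction a with
  | nil => simpa using red_red b
  | cons c a' ih =>
    cases c with
    | inr z => show Sum.inr z :: red (a' ++ red b) = Sum.inr z :: red (a' ++ b); rw [ih]
    | inl t => show redCons t (red (a' ++ red b)) = redCons t (red (a' ++ b)); rw [ih]

lemma red_append_left : ∀ (a b : List (T ⊕ Z)), red (red a ++ b) = red (a ++ b) := by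
  intro a
  induction a with
  | nil => intro b; rfl
  | cons c a' ih =>
    intro b
    cases c with
    | inr z =>
      show red (Sum.inr z :: (red a' ++ b)) = _
      show Sum.inr z :: red (red a' ++ b) = Sum.inr z :: red (a' ++ b)
      rw [ih]
    | inl t =>
      have key : red (a' ++ b) = red (red a' ++ b) := (ih b).symm
      show red (redCons t (red a') ++ b) = redCons t (red (a' ++ b))
      cases h : red a' with
      | nil =>
        rw [h] at key
        simp only [List.nil_append] at key
        rw [redCons_nil, key]
        rfl
      | cons c' m =>
        cases c' with
        | inl t' =>
          rw [h] at key
          rw [redCons_inl]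
          show red (Sum.inl (t * t') :: (m ++ b)) = _
          show redCons (t * t') (red (m ++ b)) = redCons t (red (a' ++ b))
          rw [key]
          show _ = redCons t (redCons t' (red (m ++ b)))
          cases h2 : red (m ++ b) with
          | nil => rfl
          | cons d m' =>
            cases d with
            | inl s => simp [redCons_inl, mul_assoc]
            | inr z => rfl
        | inr z =>
          rw [h] at key
          rw [redCons_inr]
          show red (Sum.inl t :: (Sum.inr z :: (m ++ b))) = _
          show redCons t (red (Sum.inr z :: (m ++ b))) = redCons t (red (a' ++ b))
          rw [key]
          rfl

/-- The congruence "having equal reductions". -/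
def redCon : Con (FreeSemigroup (T ⊕ Z)) where
  r x y := red (toL x) = red (toL y)
  iseqv := ⟨fun _ => rfl, Eq.symm, Eq.trans⟩
  mul' := by
    intro a b c d h1 h2
    show red (toL (a * c)) = red (toL (b * d))
    rw [toL_mul, toL_mul, ← red_append_left, ← red_append_right (red (toL a)), h1, h2,
      red_append_right, red_append_left]

lemma con_le_redCon : con T Z ≤ (redCon : Con (FreeSemigroup (T ⊕ Z))) := by
  apply Con.conGen_le.mpr
  rintro x y ⟨t, t', rfl, rfl⟩
  show red (toL _) = red (toL _)
  rfl

lemma red_eq_of_con {x y : FreeSemigroup (T ⊕ Z)} (h : con T Z x y) :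
    red (toL x) = red (toL y) := con_le_redCon h

/-- Multiplying a generator `inl t` onto a word is congruent to `redCons`. -/
lemma con_redCons (t : T) : ∀ (rl : List (T ⊕ Z)) (h : rl ≠ []),
    con T Z (FreeSemigroup.of (Sum.inl t) * mk rl h)
      (mk (redCons t rl) (redCons_ne_nil t rl)) := by
  intro rl h
  cases rl with
  | nil => exact absurd rfl h
  | cons c l' =>
    cases c with
    | inl t' =>
      show con T Z _ (mk (Sum.inl (t * t') :: l') (by simp))
      cases l' with
      | nil => exact ConGen.Rel.of _ _ ⟨t, t', rfl, rfl⟩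
      | cons d l'' =>
        have hne : (d :: l'') ≠ [] := by simp
        rw [mk_cons (Sum.inl t') (d :: l'') hne, mk_cons (Sum.inl (t * t')) (d :: l'') hne,
          ← mul_assoc]
        exact (con T Z).mul (ConGen.Rel.of _ _ ⟨t, t', rfl, rfl⟩) ((con T Z).refl _)
    | inr z =>
      show con T Z _ (mk (Sum.inl t :: Sum.inr z :: l') (by simp))
      rw [mk_cons (Sum.inl t) _ (by simp : (Sum.inr z :: l') ≠ [])]
      exact (con T Z).refl _

/-- Every word is congruent to its reduction. -/
lemma con_red : ∀ (l : List (T ⊕ Z)) (h : l ≠ []),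
    con T Z (mk l h) (mk (red l) (red_ne_nil l h)) := by
  intro l
  induction l with
  | nil => intro h; exact absurd rfl h
  | cons a m ih =>
    intro h
    cases m with
    | nil =>
      cases a with
      | inl t => exact (con T Z).refl _
      | inr z => exact (con T Z).refl _
    | cons b m'' =>
      set m := b :: m'' with hm
      have hm' : m ≠ [] := by rw [hm]; simp
      have ihm := ih hm'
      have hred : red m ≠ [] := red_ne_nil m hm'
      rw [mk_cons a m hm']
      have step : con T Z (FreeSemigroup.of a * mk m hm')
          (FreeSemigroup.of a * mk (red m) hred) :=
        (con T Z).mul ((con T Z).refl _) ihm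
      refine (con T Z).trans step ?_
      cases a with
      | inr z =>
        have e : mk (red (Sum.inr z :: m)) (red_ne_nil _ h)
            = FreeSemigroup.of (Sum.inr z) * mk (red m) hred := mk_cons _ _ _ _
        rw [e]
        exact (con T Z).refl _
      | inl t =>
        show con T Z _ (mk (redCons t (red m)) _)
        exact con_redCons t (red m) hred

lemma con_of_red_eq {x y : FreeSemigroup (T ⊕ Z)} (h : red (toL x) = red (toL y)) :
    con T Z x y := by
  have hx := con_red (toL x) (toL_ne_nil x)
  have hy := con_red (toL y) (toL_ne_nil y)
  rw [mk_toL] at hx hy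
  refine (con T Z).trans hx (((con T Z).symm ?_))
  refine (con T Z).trans hy ?_
  have : mk (red (toL y)) (red_ne_nil _ (toL_ne_nil y)) =
      mk (red (toL x)) (red_ne_nil _ (toL_ne_nil x)) := by
    simp only [mk, h]
  rw [this]
  exact (con T Z).refl _

end Red

section Map

variable {T Z T' Z' : Type*} [Semigroup T] [Semigroup T']
variable (f : T →ₙ* T') (g : Z → Z')

lemma redCons_map (t : T) (l : List (T ⊕ Z)) :
    redCons (f t) (List.map (Sum.map f g) l) = List.map (Sum.map f g) (redCons t l) := by
  cases l with
  | nil => simp [redCons_nil]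
  | cons a m =>
    cases a with
    | inl t' => simp [redCons_inl, map_mul]
    | inr z => simp [redCons_inr]

lemma red_map : ∀ l : List (T ⊕ Z),
    red (List.map (Sum.map f g) l) = List.map (Sum.map f g) (red l) := by
  intro l
  induction l with
  | nil => rfl
  | cons a m ih =>
    cases a with
    | inl t =>
      show redCons (f t) (red (List.map (Sum.map f g) m)) = _
      rw [ih]
      exact redCons_map f g t (red m)
    | inr z =>
      show Sum.inr (g z) :: red (List.map (Sum.map f g) m) = _
      rw [ih]
      rfl

lemma toL_map (u : FreeSemigroup (T ⊕ Z)) :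
    toL (FreeSemigroup.map (Sum.map f g) u) = List.map (Sum.map f g) (toL u) := by
  induction u using FreeSemigroup.recOnMul with
  | ih1 s => rfl
  | ih2 u v ihu ihv =>
    rw [map_mul, toL_mul, toL_mul, List.map_append, ihu, ihv]

end Map

/-- If `g : Z ↪ Z'` is an injective map of sets and `f : T ↪ T'` is an
injective semigroup homomorphism, then the induced semigroup homomorphism
`S̃(T ⊔ Z) → S̃(T' ⊔ Z')` (i.e. the unique semigroup homomorphism sending the class of a
generator `s` to the class of `Sum.map f g s`) is injective. -/
theorem induced_injective {T Z T' Z' : Type*} [Semigroup T] [Semigroup T']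
    (f : T →ₙ* T') (hf : Function.Injective f)
    (g : Z → Z') (hg : Function.Injective g)
    (F : STilde T Z →ₙ* STilde T' Z')
    (hF : ∀ s : T ⊕ Z, F (ofGen T Z s) = ofGen T' Z' (Sum.map f g s)) :
    Function.Injective F := by
  have hφ : Function.Injective (Sum.map (⇑f) g) := hf.sumMap hg
  -- F on classes is the map induced by `Sum.map f g` on letters.
  have Fmk : ∀ u : FreeSemigroup (T ⊕ Z),
      F ((u : (con T Z).Quotient)) =
        ((FreeSemigroup.map (Sum.map (⇑f) g) u : FreeSemigroup (T' ⊕ Z')) :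
          (con T' Z').Quotient) := by
    intro u
    induction u using FreeSemigroup.recOnMul with
    | ih1 s => rw [FreeSemigroup.map_of]; exact hF s
    | ih2 u v ihu ihv =>
      rw [Con.coe_mul]; exact (map_mul F ((FreeSemigroup.of u : FreeSemigroup (T ⊕ Z)) : (con T Z).Quotient) (v : (con T Z).Quotient)).trans ((congrArg₂ (· * ·) ihu ihv).trans (by rw [map_mul]; rfl))
  intro x y h
  induction x using Con.induction_on with
  | H u =>
    induction y using Con.induction_on with
    | H v =>
      rw [Fmk u, Fmk v] at h
      replace h := (Con.eq (c := con T' Z')).1 h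
      refine (Con.eq (c := con T Z)).2 ?_
      apply con_of_red_eq
      have h' := red_eq_of_con h
      rw [toL_map, toL_map, red_map, red_map] at h'
      exact List.map_injective_iff.mpr hφ h'
end Stmt2
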